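/- Let N, K be positive integers and ε > 0 such that the closed unit disc intersected with the sector {q : |q/|q| - 1| ≤ ε} is contained in the union of the K closed discs D(j/K, 1/K), j = 1, …, K. Let A ⊆ ℂ and p ∈ ℂ, r > 0 be such that there exist unit vectors t₁, …, t_N with A ∩ D(p, 2r) ⊆ ⋃ₖ {q : |(q - p)/|q - p| - tₖ| < ε} ∪ {p}. Then A ∩ D(p, r) can be covered by K·N closed discs of radius 2r/K. -/

import Mathlib

open Complex Set

theorem stmt16 (N K : ℕ) (hN : 0 < N) (hK : 0 < K) (ε : ℝ) (hε : 0 < ε)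
    (hcover : Metric.closedBall (0 : ℂ) 1 ∩ {q : ℂ | ‖q / (‖q‖ : ℂ) - 1‖ ≤ ε} ⊆
      ⋃ j ∈ Finset.Icc 1 K, Metric.closedBall ((j : ℂ) / (K : ℂ)) (1 / K))
    (A : Set ℂ) (p : ℂ) (r : ℝ) (hr : 0 < r)
    (t : Fin N → ℂ) (ht : ∀ k, ‖t k‖ = 1)
    (hA : A ∩ Metric.closedBall p (2 * r) ⊆
      (⋃ k, {q : ℂ | ‖(q - p) / (‖q - p‖ : ℂ) - t k‖ < ε}) ∪ {p}) :
    ∃ c : Fin (K * N) → ℂ,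
      A ∩ Metric.closedBall p r ⊆ ⋃ i, Metric.closedBall (c i) (2 * r / K) := by
  classical
  have hKR : (0 : ℝ) < K := by exact_mod_cast hK
  have hKC : (K : ℂ) ≠ 0 := by exact_mod_cast hKR.ne'
  set e := (finProdFinEquiv : Fin K × Fin N ≃ Fin (K * N)) with he
  refine ⟨fun i => p + (2 * (r : ℂ)) * t (e.symm i).2 *
    (((((e.symm i).1 : ℕ) : ℂ) + 1) / (K : ℂ)), ?_⟩
  rintro q ⟨hqA, hqB⟩
  rw [Metric.mem_closedBall, Complex.dist_eq] at hqB
  have hq2 : q ∈ A ∩ Metric.closedBall p (2 * r) := by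
    refine ⟨hqA, ?_⟩
    rw [Metric.mem_closedBall, Complex.dist_eq]
    nlinarith
  -- helper: given j ∈ [1,K], k, and the distance bound, conclude membership
  have key : ∀ (j : ℕ), 1 ≤ j → j ≤ K → ∀ (k : Fin N),
      ‖q - (p + (2 * (r : ℂ)) * t k * ((j : ℂ) / (K : ℂ)))‖ ≤ 2 * r / K →
      q ∈ ⋃ i, Metric.closedBall (p + (2 * (r : ℂ)) * t (e.symm i).2 *
        (((((e.symm i).1 : ℕ) : ℂ) + 1) / (K : ℂ))) (2 * r / K) := by
    intro j hj1 hjK k hdist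
    refine mem_iUnion.2 ⟨e (⟨j - 1, by omega⟩, k), ?_⟩
    rw [Metric.mem_closedBall, Complex.dist_eq, Equiv.symm_apply_apply]
    have hcast : (((j - 1 : ℕ) : ℂ) + 1) = (j : ℂ) := by
      have h1 : ((j - 1 : ℕ) : ℂ) + 1 = (((j - 1) + 1 : ℕ) : ℂ) := by push_cast; ring
      rw [h1]
      congr 1
      omega
    simpa [hcast] using hdist
  rcases hA hq2 with h | h
  · obtain ⟨k, hk⟩ := mem_iUnion.1 h
    simp only [mem_setOf_eq] at hk
    have htk : t k ≠ 0 := by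
      intro h0
      have := ht k
      rw [h0, norm_zero] at this
      norm_num at this
    have h2r : (2 * (r : ℂ)) ≠ 0 := by
      simp only [ne_eq, mul_eq_zero, not_or]
      constructor
      · norm_num
      · exact_mod_cast hr.ne'
    set w : ℂ := (q - p) / ((2 * (r : ℂ)) * t k) with hw
    have hrC : ((r : ℂ)) ≠ 0 := Complex.ofReal_ne_zero.2 hr.ne'
    have hn2r : ‖(2 * (r : ℂ))‖ = 2 * r := by
      rw [norm_mul, Complex.norm_real, Real.norm_eq_abs, abs_of_pos hr]
      norm_num
    have hnw : ‖w‖ = ‖q - p‖ / (2 * r) := by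
      rw [hw, norm_div, norm_mul, ht k, mul_one, hn2r]
    have hw1 : w ∈ Metric.closedBall (0 : ℂ) 1 := by
      rw [Metric.mem_closedBall, dist_zero_right, hnw]
      rw [div_le_one (by positivity)]
      have hqB' : ‖q - p‖ ≤ r := hqB
      linarith
    have hw2 : ‖w / ((‖w‖ : ℝ) : ℂ) - 1‖ ≤ ε := by
      by_cases hqp : q = p
      · have : w = 0 := by simp [hw, hqp]
        rw [this]
        simp only [zero_div, zero_sub, norm_neg, norm_one]
        have := hk
        rw [hqp] at this
        simpa [ht k] using this.le
      · have hqpne : q - p ≠ 0 := sub_ne_zero.2 hqp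
        have hnqp : (‖q - p‖ : ℂ) ≠ 0 := by
          exact_mod_cast norm_ne_zero_iff.2 hqpne
        have heq : w / ((‖w‖ : ℝ) : ℂ) - 1 =
            ((q - p) / ((‖q - p‖ : ℝ) : ℂ) - t k) / t k := by
          rw [hw, hnw]
          push_cast
          have hc : ((r : ℂ)) * t k * ((r : ℂ))⁻¹ * (t k)⁻¹ = 1 := by
            field_simp
          field_simp [hrC, htk, hnqp]
        rw [heq, norm_div, ht k, div_one]
        exact hk.le
    obtain ⟨j, hj, hjb⟩ := mem_iUnion₂.1 (hcover ⟨hw1, hw2⟩)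
    rw [Finset.mem_Icc] at hj
    rw [Metric.mem_closedBall, Complex.dist_eq] at hjb
    refine key j hj.1 hj.2 k ?_
    have heq2 : q - (p + (2 * (r : ℂ)) * t k * ((j : ℂ) / (K : ℂ))) =
        (w - (j : ℂ) / (K : ℂ)) * ((2 * (r : ℂ)) * t k) := by
      rw [hw]
      field_simp
      ring
    rw [heq2, norm_mul, norm_mul, ht k, mul_one, hn2r]
    calc ‖w - (j : ℂ) / (K : ℂ)‖ * (2 * r) ≤ (1 / K) * (2 * r) := by
          apply mul_le_mul_of_nonneg_right hjb (by positivity)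
      _ = 2 * r / K := by ring
  · have hqp : q = p := h
    refine key 1 le_rfl hK ⟨0, hN⟩ ?_
    rw [hqp]
    simp only [Nat.cast_one]
    have heq3 : p - (p + (2 * (r : ℂ)) * t ⟨0, hN⟩ * ((1 : ℂ) / (K : ℂ))) =
        -((2 * (r : ℂ)) * t ⟨0, hN⟩ / (K : ℂ)) := by ring
    rw [heq3, norm_neg, norm_div, norm_mul, ht ⟨0, hN⟩, mul_one]
    have hn2r : ‖(2 * (r : ℂ))‖ = 2 * r := by
      rw [norm_mul, Complex.norm_real, Real.norm_eq_abs, abs_of_pos hr]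
      norm_num
    rw [hn2r, Complex.norm_natCast]
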